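/- arXiv:2012.10805 — 2 statements merged into one kernel-verified Lean document; each statement's English description precedes it below -/
import Mathlib

section
/- For 0 ≤ ρ < 1, ∫₀¹ λ² √((1−λ²)(1−ρ²λ²)) dλ = (π/16) · (1 − (ρ²/8) · Σ_{n=0}^∞ (Cₙ·C_{n+2}/16ⁿ) ρ^(2n)), where Cₙ is the n-th Catalan number. -/
open Real MeasureTheory

lemma sinpow_halfpi (m : ℕ) :
    ∫ x in (0:ℝ)..(π/2), Real.sin x ^ (2*m) = π/2 * (Nat.centralBinom m) / 4 ^ m := by
  induction m with
  | zero => simp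
  | succ k ih =>
    have h : 2 * (k+1) = 2*k + 2 := by ring
    rw [h, integral_sin_pow, ih]
    have hb := Nat.succ_mul_centralBinom_succ k
    have hbR : ((k:ℝ)+1) * (Nat.centralBinom (k+1)) = 2 * (2*k+1) * Nat.centralBinom k := by
      exact_mod_cast hb
    simp only [Real.sin_pi_div_two, Real.cos_pi_div_two, Real.sin_zero, Real.cos_zero]
    have h4 : (4:ℝ)^(k+1) = 4^k * 4 := by ring
    field_simp
    push_cast
    linear_combination (-2*π*(4:ℝ)^k) * hbR

lemma sincos_halfpi (m : ℕ) :
    ∫ x in (0:ℝ)..(π/2), Real.sin x ^ (2*m) * Real.cos x ^ 2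
      = π * (catalan m) / 4 ^ (m+1) := by
  have hsplit : ∀ x : ℝ, Real.sin x ^ (2*m) * Real.cos x ^ 2
      = Real.sin x ^ (2*m) - Real.sin x ^ (2*(m+1)) := by
    intro x
    have := Real.sin_sq_add_cos_sq x
    have h2 : Real.cos x ^ 2 = 1 - Real.sin x ^ 2 := by linarith
    rw [h2]; ring
  rw [intervalIntegral.integral_congr (fun x _ => hsplit x),
    intervalIntegral.integral_sub (by apply Continuous.intervalIntegrable; fun_prop)
      (by apply Continuous.intervalIntegrable; fun_prop),
    sinpow_halfpi, sinpow_halfpi]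
  have hb := Nat.succ_mul_centralBinom_succ m
  have hbR : ((m:ℝ)+1) * (Nat.centralBinom (m+1)) = 2 * (2*m+1) * Nat.centralBinom m := by
    exact_mod_cast hb
  have hc := succ_mul_catalan_eq_centralBinom m
  have hcR : ((m:ℝ)+1) * (catalan m) = Nat.centralBinom m := by exact_mod_cast hc
  have h4 : (4:ℝ)^(m+1) = 4^m * 4 := by ring
  have h4p : (0:ℝ) < 4^m := pow_pos (by norm_num) m
  field_simp
  have hm1 : ((m:ℝ)+1) ≠ 0 := by positivity
  have hd : (Nat.centralBinom (m+1) : ℝ) = 2*(2*m+1) * catalan m := by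
    apply mul_left_cancel₀ hm1
    rw [hbR, ← hcR]; ring
  linear_combination (-(4:ℝ)^(m+1)) * hcR + (-(4:ℝ)^m) * hd

lemma moment (m : ℕ) :
    ∫ l in (0:ℝ)..1, l ^ (2*m) * Real.sqrt (1 - l^2) = π * (catalan m) / 4 ^ (m+1) := by
  have key : ∫ x in (0:ℝ)..(π/2), Real.cos x • ((Real.sin x)^(2*m) * Real.sqrt (1 - (Real.sin x)^2))
      = ∫ l in (Real.sin 0)..(Real.sin (π/2)), l ^ (2*m) * Real.sqrt (1 - l^2) := by
    exact intervalIntegral.integral_comp_smul_deriv (g := fun l => l ^ (2*m) * Real.sqrt (1 - l^2))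
      (fun x _ => Real.hasDerivAt_sin x) continuous_cos.continuousOn (by fun_prop)
  rw [Real.sin_zero, Real.sin_pi_div_two] at key
  rw [← key, ← sincos_halfpi m]
  apply intervalIntegral.integral_congr
  intro x hx
  rw [Set.uIcc_of_le (by positivity)] at hx
  have hc : 0 ≤ Real.cos x := Real.cos_nonneg_of_mem_Icc
    ⟨le_trans (by norm_num [Real.pi_pos.le]; linarith [Real.pi_pos.le]) hx.1, hx.2⟩
  have : Real.sqrt (1 - Real.sin x ^ 2) = Real.cos x := by
    rw [← Real.cos_sq' x, Real.sqrt_sq hc]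
  show Real.cos x • (Real.sin x ^ (2*m) * Real.sqrt (1 - Real.sin x ^ 2))
      = Real.sin x ^ (2*m) * Real.cos x ^ 2
  rw [this, smul_eq_mul]; ring

noncomputable def sqc : ℕ → ℝ
  | 0 => 1
  | n+1 => -((catalan n : ℝ) / (2 * 4 ^ n))

lemma centralBinom_le (n : ℕ) : Nat.centralBinom n ≤ 2 * 4 ^ n := by
  induction n with
  | zero => simp [Nat.centralBinom]
  | succ k ih =>
    have hb := Nat.succ_mul_centralBinom_succ k
    have h4 : (k+1) * Nat.centralBinom (k+1) ≤ (k+1) * (2 * 4 ^ (k+1)) := by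
      rw [hb]; ring_nf; nlinarith [Nat.centralBinom_pos k, ih]
    exact Nat.le_of_mul_le_mul_left h4 (Nat.succ_pos k)

lemma catalan_le (n : ℕ) : (catalan n : ℝ) ≤ 2 * 4 ^ n := by
  have h1 : (catalan n : ℝ) ≤ Nat.centralBinom n := by
    have := succ_mul_catalan_eq_centralBinom n
    have hR : ((n:ℝ)+1) * catalan n = Nat.centralBinom n := by exact_mod_cast this
    nlinarith [Nat.cast_nonneg (α := ℝ) (catalan n), Nat.cast_nonneg (α := ℝ) n]
  have h2 : (Nat.centralBinom n : ℝ) ≤ 2 * 4 ^ n := by exact_mod_cast centralBinom_le n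
  linarith

lemma abs_sqc_le (n : ℕ) : |sqc n| ≤ 1 := by
  cases n with
  | zero => simp [sqc]
  | succ k =>
    rw [sqc, abs_neg, abs_div, abs_of_nonneg (by positivity : (0:ℝ) ≤ (catalan k : ℝ)),
      abs_of_nonneg (by positivity : (0:ℝ) ≤ 2 * 4 ^ k)]
    rw [div_le_one (by positivity)]
    exact catalan_le k

lemma sum_catalan_div (N : ℕ) :
    ∑ n ∈ Finset.range N, (catalan n : ℝ) / (2 * 4 ^ n) = 1 - (Nat.centralBinom N : ℝ) / 4 ^ N := by
  induction N with
  | zero => simp [Nat.centralBinom]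
  | succ k ih =>
    rw [Finset.sum_range_succ, ih]
    have hb := Nat.succ_mul_centralBinom_succ k
    have hbR : ((k:ℝ)+1) * (Nat.centralBinom (k+1)) = 2 * (2*k+1) * Nat.centralBinom k := by
      exact_mod_cast hb
    have hc := succ_mul_catalan_eq_centralBinom k
    have hcR : ((k:ℝ)+1) * (catalan k) = Nat.centralBinom k := by exact_mod_cast hc
    have hm1 : ((k:ℝ)+1) ≠ 0 := by positivity
    have hd : (Nat.centralBinom (k+1) : ℝ) = 2*(2*k+1) * catalan k := by
      apply mul_left_cancel₀ hm1
      rw [hbR, ← hcR]; ring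
    have h4p : (0:ℝ) < 4 ^ k := by positivity
    rw [hd, ← hcR]
    field_simp
    ring

lemma catalan_conv (m : ℕ) :
    ∑ k ∈ Finset.range (m+1), (catalan k : ℝ) * (catalan (m-k)) = catalan (m+1) := by
  have h := catalan_succ' m
  have : catalan (m+1) = ∑ k ∈ Finset.range (m+1), catalan k * catalan (m-k) := by
    rw [h, Finset.Nat.sum_antidiagonal_eq_sum_range_succ_mk]
  rw [this]
  push_cast
  rfl

lemma sqc_coeff (n : ℕ) :
    ∑ k ∈ Finset.range (n+1), sqc k * sqc (n-k)
      = if n = 0 then 1 else if n = 1 then -1 else 0 := by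
  match n with
  | 0 => simp [sqc]
  | 1 => norm_num [Finset.sum_range_succ, sqc]
  | (m+2) =>
    simp only [if_neg (Nat.succ_ne_zero _), if_neg (by omega : ¬ m + 2 = 1)]
    rw [Finset.sum_range_succ' (fun k => sqc k * sqc (m+2-k)) (m+2),
      Finset.sum_range_succ]
    have hmid : ∀ k ∈ Finset.range (m+1),
        sqc (k+1) * sqc (m+2-(k+1)) = ((catalan k : ℝ) * (catalan (m-k))) * (1 / (4 * 4^m)) := by
      intro k hk
      have hk' : k ≤ m := by simpa [Nat.lt_succ_iff] using hk
      have h1 : m + 2 - (k+1) = (m - k) + 1 := by omega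
      rw [h1]
      show -((catalan k : ℝ) / (2 * 4 ^ k)) * -((catalan (m-k) : ℝ) / (2 * 4 ^ (m-k))) = _
      have h4 : (4:ℝ) ^ k * 4 ^ (m-k) = 4 ^ m := by
        rw [← pow_add]; congr 1; omega
      rw [neg_mul_neg, div_mul_div_comm, ← h4, mul_one_div]
      congr 1
      ring
    rw [Finset.sum_congr rfl hmid, ← Finset.sum_mul, catalan_conv]
    simp only [show m+2-(m+1+1) = 0 from by omega, Nat.sub_zero]
    show (catalan (m+1) : ℝ) * (1 / (4 * 4^m)) + sqc (m+2) * sqc 0 + sqc 0 * sqc (m+2) = 0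
    show (catalan (m+1) : ℝ) * (1 / (4 * 4^m)) + -((catalan (m+1) : ℝ) / (2 * 4 ^ (m+1))) * 1
        + 1 * -((catalan (m+1) : ℝ) / (2 * 4 ^ (m+1))) = 0
    have h4p : (0:ℝ) < 4 ^ m := by positivity
    field_simp
    ring

lemma summable_tail : Summable (fun n => (catalan n : ℝ) / (2 * 4 ^ n)) := by
  apply summable_of_sum_range_le (c := 1) (fun n => by positivity)
  intro n
  rw [sum_catalan_div]
  have : (0:ℝ) ≤ (Nat.centralBinom n : ℝ) / 4 ^ n := by positivity
  linarith

lemma tsum_tail_le : ∑' n, (catalan n : ℝ) / (2 * 4 ^ n) ≤ 1 := by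
  apply tsum_le_of_sum_range_le (fun n => by positivity)
  intro n
  rw [sum_catalan_div]
  have : (0:ℝ) ≤ (Nat.centralBinom n : ℝ) / 4 ^ n := by positivity
  linarith

lemma hasSum_sqrt_one_sub {x : ℝ} (hx0 : 0 ≤ x) (hx1 : x < 1) :
    HasSum (fun n => sqc n * x ^ n) (Real.sqrt (1 - x)) := by
  have hxle1 : x ≤ 1 := hx1.le
  have hnorm : Summable (fun n => ‖sqc n * x ^ n‖) := by
    apply Summable.of_nonneg_of_le (fun n => norm_nonneg _)
      (fun n => ?_) (summable_geometric_of_lt_one hx0 hx1)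
    rw [norm_mul, Real.norm_eq_abs, Real.norm_eq_abs, abs_of_nonneg (by positivity : (0:ℝ) ≤ x ^ n)]
    calc |sqc n| * x ^ n ≤ 1 * x ^ n := by
          apply mul_le_mul_of_nonneg_right (abs_sqc_le n) (by positivity)
      _ = x ^ n := one_mul _
  have hsum : Summable (fun n => sqc n * x ^ n) := hnorm.of_norm
  set S := ∑' n, sqc n * x ^ n with hSdef
  have hS : HasSum (fun n => sqc n * x ^ n) S := hsum.hasSum
  -- Cauchy product : S * S = 1 - x
  have key : S * S = 1 - x := by
    rw [hSdef, tsum_mul_tsum_eq_tsum_sum_range_of_summable_norm hnorm hnorm]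
    have hterm : ∀ n : ℕ, (∑ k ∈ Finset.range (n+1), sqc k * x ^ k * (sqc (n-k) * x ^ (n-k)))
        = (if n = 0 then 1 else if n = 1 then -1 else 0) * x ^ n := by
      intro n
      rw [← sqc_coeff n, Finset.sum_mul]
      apply Finset.sum_congr rfl
      intro k hk
      have hk' : k ≤ n := by simpa [Nat.lt_succ_iff] using hk
      have : x ^ k * x ^ (n-k) = x ^ n := by rw [← pow_add]; congr 1; omega
      calc sqc k * x ^ k * (sqc (n-k) * x ^ (n-k)) = sqc k * sqc (n-k) * (x ^ k * x ^ (n-k)) := by ring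
        _ = sqc k * sqc (n-k) * x ^ n := by rw [this]
    rw [tsum_congr hterm]
    rw [tsum_eq_sum (s := {0, 1}) (by
      intro b hb
      simp only [Finset.mem_insert, Finset.mem_singleton] at hb
      push_neg at hb
      rw [if_neg hb.1, if_neg hb.2, zero_mul])]
    norm_num [sub_eq_add_neg]
  -- positivity of S
  have htail : |∑' n, sqc (n+1) * x ^ (n+1)| ≤ x := by
    have h1 : ∀ n : ℕ, ‖sqc (n+1) * x ^ (n+1)‖ ≤ (catalan n : ℝ) / (2 * 4 ^ n) * x := by
      intro n
      rw [norm_mul, Real.norm_eq_abs, Real.norm_eq_abs,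
        abs_of_nonneg (by positivity : (0:ℝ) ≤ x ^ (n+1))]
      have habs : |sqc (n+1)| = (catalan n : ℝ) / (2 * 4 ^ n) := by
        rw [show sqc (n+1) = -((catalan n : ℝ) / (2 * 4 ^ n)) from rfl, abs_neg,
          abs_of_nonneg (by positivity)]
      rw [habs]
      apply mul_le_mul_of_nonneg_left _ (by positivity)
      exact pow_le_of_le_one hx0 hxle1 (Nat.succ_ne_zero n)
    calc |∑' n, sqc (n+1) * x ^ (n+1)| ≤ ∑' n, ‖sqc (n+1) * x ^ (n+1)‖ := by
          rw [← Real.norm_eq_abs]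
          exact norm_tsum_le_tsum_norm (by
            apply hnorm.comp_injective (add_left_injective 1))
      _ ≤ ∑' n, (catalan n : ℝ) / (2 * 4 ^ n) * x := by
          apply Summable.tsum_le_tsum h1 (by apply hnorm.comp_injective (add_left_injective 1))
          exact summable_tail.mul_right x
      _ = (∑' n, (catalan n : ℝ) / (2 * 4 ^ n)) * x := tsum_mul_right
      _ ≤ 1 * x := mul_le_mul_of_nonneg_right tsum_tail_le hx0
      _ = x := one_mul x
  have hSsplit : S = 1 + ∑' n, sqc (n+1) * x ^ (n+1) := by
    rw [hSdef, Summable.tsum_eq_zero_add hsum]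
    norm_num [sqc]
  have hSnonneg : 0 ≤ S := by
    rw [hSsplit]
    have := abs_le.mp htail
    linarith
  have : Real.sqrt (1 - x) = S := by
    rw [← key, ← sq, Real.sqrt_sq hSnonneg]
  rw [this]
  exact hS

theorem integral_lambda_sq_sqrt_prod (ρ : ℝ) (h0 : 0 ≤ ρ) (h1 : ρ < 1) :
    ∫ l in (0:ℝ)..1, l ^ 2 * Real.sqrt ((1 - l ^ 2) * (1 - ρ ^ 2 * l ^ 2)) =
      (Real.pi / 16) *
        (1 - (ρ ^ 2 / 8) *
          ∑' n : ℕ, ((catalan n : ℝ) * (catalan (n + 2)) / 16 ^ n) * ρ ^ (2 * n)) := by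
  set F : ℕ → ℝ → ℝ := fun n l => sqc n * ρ^(2*n) * (l^(2*n+2) * Real.sqrt (1 - l^2)) with hF
  set μ := volume.restrict (Set.Ioc (0:ℝ) 1) with hμ
  have hrho2 : ρ^2 < 1 := by nlinarith
  have hcont : ∀ n : ℕ, Continuous (F n) := by
    intro n
    apply Continuous.mul continuous_const
    exact (continuous_pow _).mul ((continuous_const.sub (continuous_pow 2)).sqrt)
  have hFint : ∀ n : ℕ, Integrable (F n) μ := fun n => (hcont n).integrableOn_Ioc
  -- value of each integral
  have hval : ∀ n : ℕ, ∫ l, F n l ∂μ = sqc n * ρ^(2*n) * (π * catalan (n+1) / 4^(n+2)) := by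
    intro n
    rw [hμ, ← intervalIntegral.integral_of_le zero_le_one, hF]
    simp only
    rw [intervalIntegral.integral_const_mul]
    congr 1
    have h2 : 2*n+2 = 2*(n+1) := by ring
    rw [h2, moment (n+1)]
  -- norms
  have hnormval : ∀ n : ℕ, ∫ l, ‖F n l‖ ∂μ
      = |sqc n| * ρ^(2*n) * (π * catalan (n+1) / 4^(n+2)) := by
    intro n
    have heq : ∀ l : ℝ, ‖F n l‖ = |sqc n| * ρ^(2*n) * (l^(2*n+2) * Real.sqrt (1 - l^2)) := by
      intro l
      rw [hF]
      have hle : |l ^ (2*n+2)| = l ^ (2*n+2) := by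
        rw [abs_pow]
        exact Even.pow_abs ⟨n+1, by ring⟩ l
      simp only [Real.norm_eq_abs, abs_mul, hle,
        abs_of_nonneg (show (0:ℝ) ≤ ρ^(2*n) by positivity),
        abs_of_nonneg (Real.sqrt_nonneg (1 - l^2))]
    simp_rw [heq]
    rw [hμ, ← intervalIntegral.integral_of_le zero_le_one,
      intervalIntegral.integral_const_mul]
    congr 1
    have h2 : 2*n+2 = 2*(n+1) := by ring
    rw [h2, moment (n+1)]
  have hsummable : Summable (fun n => ∫ l, ‖F n l‖ ∂μ) := by
    apply Summable.of_nonneg_of_le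
      (fun n => integral_nonneg (fun l => norm_nonneg _)) (fun n => ?_)
      ((summable_geometric_of_lt_one (by positivity) hrho2).mul_left π)
    rw [hnormval n]
    have h1' : |sqc n| ≤ 1 := abs_sqc_le n
    have h2' : π * catalan (n+1) / 4^(n+2) ≤ π := by
      rw [div_le_iff₀ (by positivity)]
      have := catalan_le (n+1)
      have he : (4:ℝ)^(n+2) = 4^(n+1) * 4 := by rw [pow_succ]
      have h4 : (2:ℝ) * 4^(n+1) ≤ 4^(n+2) := by
        rw [he]; nlinarith [pow_pos (show (0:ℝ) < 4 by norm_num) (n+1)]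
      nlinarith [Real.pi_pos]
    have hr : ρ^(2*n) = (ρ^2)^n := by rw [← pow_mul]
    rw [hr]
    have h3' : (0:ℝ) ≤ (ρ^2)^n := by positivity
    calc |sqc n| * (ρ^2)^n * (π * catalan (n+1) / 4^(n+2))
        ≤ 1 * (ρ^2)^n * π := by
          apply mul_le_mul (mul_le_mul h1' le_rfl h3' zero_le_one) h2' (by positivity)
          positivity
      _ = π * (ρ^2)^n := by ring
  -- swap
  have hswap := MeasureTheory.hasSum_integral_of_summable_integral_norm hFint hsummable
  -- identify the integrand
  have hint_eq : ∫ l, (∑' n, F n l) ∂μ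
      = ∫ l in (0:ℝ)..1, l ^ 2 * Real.sqrt ((1 - l ^ 2) * (1 - ρ ^ 2 * l ^ 2)) := by
    rw [intervalIntegral.integral_of_le zero_le_one, hμ]
    apply setIntegral_congr_fun measurableSet_Ioc
    intro l hl
    have hl0 : 0 < l := hl.1
    have hl1 : l ≤ 1 := hl.2
    have hll : 0 ≤ 1 - l^2 := by nlinarith
    have hx0 : 0 ≤ ρ^2 * l^2 := by positivity
    have hx1 : ρ^2 * l^2 < 1 := by nlinarith
    have hs := (hasSum_sqrt_one_sub hx0 hx1).mul_left (l^2 * Real.sqrt (1 - l^2))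
    have hterm : ∀ n : ℕ, l^2 * Real.sqrt (1 - l^2) * (sqc n * (ρ^2 * l^2)^n) = F n l := by
      intro n
      rw [hF]
      simp only
      rw [mul_pow, ← pow_mul, ← pow_mul]
      ring
    rw [funext hterm] at hs
    have := hs.tsum_eq
    show (∑' n, F n l) = l ^ 2 * Real.sqrt ((1 - l ^ 2) * (1 - ρ ^ 2 * l ^ 2))
    rw [this, Real.sqrt_mul hll]
    ring
  rw [← hint_eq]
  rw [hswap.tsum_eq.symm]
  -- evaluate the series
  have hsummable' : Summable (fun n => ∫ l, F n l ∂μ) := hswap.summable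
  rw [Summable.tsum_eq_zero_add hsummable']
  rw [hval 0]
  simp only [hval]
  have h0term : sqc 0 * ρ^(2*0) * (π * catalan (0+1) / 4^(0+2)) = π/16 := by
    norm_num [sqc, catalan_one]
  rw [h0term]
  have htail : ∀ m : ℕ, sqc (m+1) * ρ^(2*(m+1)) * (π * catalan (m+1+1) / 4^(m+1+2))
      = (-(π/16 * (ρ^2/8))) * ((catalan m : ℝ) * (catalan (m+2)) / 16^m * ρ^(2*m)) := by
    intro m
    have h16 : (16:ℝ)^m = 4^m * 4^m := by rw [← mul_pow]; norm_num
    have hr : ρ^(2*(m+1)) = ρ^(2*m) * ρ^2 := by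
      rw [show 2*(m+1) = 2*m+2 from by ring, pow_add]
    show -((catalan m : ℝ) / (2 * 4^m)) * ρ^(2*(m+1)) * (π * catalan (m+2) / 4^(m+3)) = _
    rw [hr, h16]
    have h4m : (4:ℝ)^m ≠ 0 := by positivity
    have h4m3 : (4:ℝ)^(m+3) = 4^m * 64 := by rw [pow_add]; norm_num
    rw [h4m3]
    field_simp
    ring
  rw [tsum_congr htail, tsum_mul_left]
  ring
end

section
/- For 0 ≤ ρ < 1, ∫₀¹ √((1−λ²)(1−ρ²λ²)) dλ = (π/4) · (1 − (ρ²/8) · Σ_{n=0}^∞ (Cₙ·C_{n+1}/16ⁿ) ρ^(2n)), where Cₙ is the n-th Catalan number. -/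
open Real MeasureTheory Finset

lemma wallisJ (k : ℕ) : ∫ θ in (0:ℝ)..(π/2), sin θ ^ (2*k)
    = π/2 * (Nat.centralBinom k) / 4^k := by
  induction k with
  | zero => simp
  | succ n ih =>
    have h := integral_sin_pow (a := 0) (b := π/2) (2*n)
    have h2 : 2*(n+1) = 2*n+2 := by ring
    rw [h2, h, ih]
    simp [Real.cos_pi_div_two]
    have hc : ((n+1:ℕ) : ℝ) * (Nat.centralBinom (n+1)) = 2*(2*n+1) * Nat.centralBinom n := by
      exact_mod_cast Nat.succ_mul_centralBinom_succ n
    push_cast at hc ⊢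
    have h4 : (4:ℝ)^(n+1) = 4 * 4^n := by ring
    field_simp
    linear_combination (-2*(4:ℝ)^n) * hc

lemma contg (k : ℕ) : Continuous (fun u : ℝ => u^(2*k) * Real.sqrt (1 - u^2)) := by
  exact (continuous_pow _).mul ((continuous_const.sub (continuous_pow 2)).sqrt)

lemma wallisI (k : ℕ) : ∫ x in (0:ℝ)..1, x^(2*k) * Real.sqrt (1 - x^2)
    = π/4 * (catalan k) / 4^k := by
  have hsub := intervalIntegral.integral_comp_smul_deriv (a := 0) (b := π/2)
    (f := Real.sin) (f' := Real.cos) (g := fun u : ℝ => u^(2*k) * Real.sqrt (1 - u^2))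
    (fun x _ => Real.hasDerivAt_sin x) Real.continuous_cos.continuousOn (contg k)
  rw [Real.sin_zero, Real.sin_pi_div_two] at hsub
  rw [← hsub]
  have hcongr : ∀ θ ∈ Set.uIcc (0:ℝ) (π/2),
      Real.cos θ • ((fun u : ℝ => u^(2*k) * Real.sqrt (1 - u^2)) ∘ Real.sin) θ
      = Real.sin θ ^ (2*k) - Real.sin θ ^ (2*k+2) := by
    intro θ hθ
    rw [Set.uIcc_of_le (by positivity) ] at hθ
    have hc : 0 ≤ Real.cos θ := Real.cos_nonneg_of_mem_Icc
      ⟨by linarith [hθ.1, Real.pi_pos], hθ.2⟩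
    have h1 : (1:ℝ) - Real.sin θ ^ 2 = Real.cos θ ^ 2 := by
      rw [← Real.sin_sq_add_cos_sq θ]; ring
    simp only [Function.comp_apply, smul_eq_mul, h1, Real.sqrt_sq hc]
    have := Real.sin_sq_add_cos_sq θ
    linear_combination (Real.sin θ ^ (2*k)) * this
  rw [intervalIntegral.integral_congr hcongr]
  have hint1 : IntervalIntegrable (fun θ => Real.sin θ ^ (2*k)) volume 0 (π/2) :=
    (Real.continuous_sin.pow _).intervalIntegrable _ _
  have hint2 : IntervalIntegrable (fun θ => Real.sin θ ^ (2*k+2)) volume 0 (π/2) :=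
    (Real.continuous_sin.pow _).intervalIntegrable _ _
  rw [intervalIntegral.integral_sub hint1 hint2]
  have e2 : 2*k+2 = 2*(k+1) := by ring
  rw [e2, wallisJ k, wallisJ (k+1)]
  have hc : ((k+1:ℕ) : ℝ) * (Nat.centralBinom (k+1)) = 2*(2*k+1) * Nat.centralBinom k := by
    exact_mod_cast Nat.succ_mul_centralBinom_succ k
  have hcat : ((k+1:ℕ) : ℝ) * (catalan k) = Nat.centralBinom k := by
    exact_mod_cast succ_mul_catalan_eq_centralBinom k
  push_cast at hc hcat ⊢
  have h4 : (4:ℝ)^(k+1) = 4 * 4^k := by ring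
  rw [h4]
  have h4k : (4:ℝ)^k ≠ 0 := by positivity
  have key : 32*(Nat.centralBinom k:ℝ) - 8*(Nat.centralBinom (k+1)) = 16 * catalan k := by
    have hk1 : ((k:ℝ)+1) ≠ 0 := by positivity
    apply mul_left_cancel₀ hk1
    linear_combination (-8:ℝ)*hc + (-16)*hcat
  field_simp
  linear_combination (1/8:ℝ) * key

lemma cat_le_four_pow (n : ℕ) : ((catalan n : ℕ) : ℝ) ≤ 4^n := by
  have h1 : catalan n ≤ Nat.centralBinom n := by
    calc catalan n ≤ (n+1) * catalan n := Nat.le_mul_of_pos_left _ (by omega)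
    _ = Nat.centralBinom n := succ_mul_catalan_eq_centralBinom n
  have h2 : Nat.centralBinom n ≤ 4^n := by
    have h3 : (2*n).choose n ≤ ∑ m ∈ Finset.range (2*n+1), (2*n).choose m :=
      Finset.single_le_sum (f := fun m => (2*n).choose m) (fun i _ => Nat.zero_le _)
        (Finset.mem_range.mpr (by omega))
    calc Nat.centralBinom n = (2*n).choose n := rfl
    _ ≤ 2^(2*n) := by rw [← Nat.sum_range_choose]; exact h3
    _ = 4^n := by rw [pow_mul]; norm_num
  exact_mod_cast h1.trans h2

lemma summable_cat {x : ℝ} (hx0 : 0 ≤ x) (hx : x < 1/4) :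
    Summable (fun n => (catalan n : ℝ) * x^n) := by
  have hgeo : Summable (fun n : ℕ => (4*x)^n) :=
    summable_geometric_of_lt_one (by positivity) (by linarith)
  have hle : ∀ n : ℕ, (catalan n:ℝ) * x^n ≤ (4*x)^n := by
    intro n
    calc (catalan n:ℝ) * x^n ≤ 4^n * x^n :=
        mul_le_mul_of_nonneg_right (cat_le_four_pow n) (by positivity)
    _ = (4*x)^n := by rw [← mul_pow]
  exact Summable.of_nonneg_of_le (fun n => by positivity) hle hgeo

lemma cb_succ_real (N : ℕ) : (Nat.centralBinom (N+1) : ℝ)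
    = 4*(Nat.centralBinom N) - 2*(catalan N) := by
  have hc : ((N+1:ℕ):ℝ)*(Nat.centralBinom (N+1)) = 2*(2*N+1)*Nat.centralBinom N := by
    exact_mod_cast Nat.succ_mul_centralBinom_succ N
  have hcat : ((N+1:ℕ):ℝ)*(catalan N) = Nat.centralBinom N := by
    exact_mod_cast succ_mul_catalan_eq_centralBinom N
  push_cast at hc hcat
  have hN1 : ((N:ℝ)+1) ≠ 0 := by positivity
  apply mul_left_cancel₀ hN1
  linear_combination hc + 2*hcat

lemma partial_cat (N : ℕ) : ∑ n ∈ Finset.range N, 2*(catalan n : ℝ)/4^(n+1)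
    = 1 - (Nat.centralBinom N : ℝ)/4^N := by
  induction N with
  | zero => simp
  | succ N ih =>
    rw [Finset.sum_range_succ, ih, cb_succ_real N]
    have h4 : (4:ℝ)^(N+1) = 4*4^N := by ring
    have h4N : (4:ℝ)^N ≠ 0 := by positivity
    rw [h4]
    field_simp
    ring

lemma summable_cat_quarter : Summable (fun n => 2*(catalan n:ℝ)/4^(n+1)) := by
  refine summable_of_sum_range_le (fun n => by positivity) (c := 1) (fun N => ?_)
  rw [partial_cat]
  have : (0:ℝ) ≤ (Nat.centralBinom N:ℝ)/4^N := by positivity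
  linarith

lemma tsum_cat_quarter_le : ∑' n, 2*(catalan n:ℝ)/4^(n+1) ≤ 1 := by
  refine Real.tsum_le_of_sum_range_le (fun n => by positivity) (fun N => ?_)
  rw [partial_cat]
  have : (0:ℝ) ≤ (Nat.centralBinom N:ℝ)/4^N := by positivity
  linarith

lemma cat_mul_cat {x : ℝ} (hx0 : 0 ≤ x) (hx : x < 1/4) :
    (∑' n, (catalan n:ℝ)*x^n) * (∑' n, (catalan n:ℝ)*x^n)
      = ∑' n, (catalan (n+1):ℝ)*x^n := by
  have hs : Summable (fun n => ‖(catalan n:ℝ)*x^n‖) := by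
    have : ∀ n : ℕ, ‖(catalan n:ℝ)*x^n‖ = (catalan n:ℝ)*x^n := fun n =>
      Real.norm_of_nonneg (by positivity)
    simpa [this] using summable_cat hx0 hx
  rw [tsum_mul_tsum_eq_tsum_sum_antidiagonal_of_summable_norm hs hs]
  refine tsum_congr (fun n => ?_)
  have hcg : ∀ ij ∈ Finset.HasAntidiagonal.antidiagonal n,
      ((catalan ij.1:ℝ)*x^ij.1) * ((catalan ij.2:ℝ)*x^ij.2)
      = ((catalan ij.1 * catalan ij.2 : ℕ) : ℝ) * x^n := by
    intro ij hij
    have h : ij.1 + ij.2 = n := by simpa using Finset.HasAntidiagonal.mem_antidiagonal.mp hij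
    push_cast
    rw [← h, pow_add]
    ring
  rw [Finset.sum_congr rfl hcg, ← Finset.sum_mul, ← Nat.cast_sum, ← catalan_succ']

lemma gkey {x : ℝ} (hx0 : 0 ≤ x) (hx : x < 1/4) :
    (∑' n, (catalan n:ℝ)*x^n)
      = 1 + x*((∑' n, (catalan n:ℝ)*x^n) * (∑' n, (catalan n:ℝ)*x^n)) := by
  rw [cat_mul_cat hx0 hx, Summable.tsum_eq_zero_add (summable_cat hx0 hx)]
  norm_num
  rw [← tsum_mul_left]
  exact tsum_congr (fun n => by ring)

lemma sqrt_one_sub_catalan {y : ℝ} (hy0 : 0 ≤ y) (hy1 : y < 1) :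
    Real.sqrt (1 - y) = 1 - 2*(y/4) * ∑' n, (catalan n:ℝ)*(y/4)^n := by
  have hx0 : 0 ≤ y/4 := by positivity
  have hx : y/4 < 1/4 := by linarith
  set x := y/4 with hxdef
  set S := ∑' n, (catalan n:ℝ)*x^n with hS
  have hbound : 2*x*S ≤ 4*x := by
    have h1 : 2*x*S = ∑' n, (2*x)*((catalan n:ℝ)*x^n) := by
      rw [tsum_mul_left]
    have h2 : ∀ n : ℕ, (2*x)*((catalan n:ℝ)*x^n) ≤ (4*x)*(2*(catalan n:ℝ)/4^(n+1)) := by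
      intro n
      have hxq : x^n ≤ (1/4)^n := pow_le_pow_left₀ hx0 (by linarith) n
      have : (4*x)*(2*(catalan n:ℝ)/4^(n+1)) = (2*x)*((catalan n:ℝ)*(1/4)^n) := by
        rw [one_div_pow]
        field_simp
        ring
      rw [this]
      have := mul_le_mul_of_nonneg_left hxq (by positivity : (0:ℝ) ≤ 2*x*(catalan n))
      nlinarith [this]
    have h3 := Summable.tsum_le_tsum h2 ((summable_cat hx0 hx).mul_left (2*x))
      (summable_cat_quarter.mul_left (4*x))
    rw [← h1] at h3
    calc 2*x*S ≤ ∑' n, (4*x)*(2*(catalan n:ℝ)/4^(n+1)) := h3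
    _ = (4*x) * ∑' n, 2*(catalan n:ℝ)/4^(n+1) := tsum_mul_left
    _ ≤ (4*x) * 1 := mul_le_mul_of_nonneg_left tsum_cat_quarter_le (by positivity)
    _ = 4*x := by ring
  have hpos : 0 ≤ 1 - 2*x*S := by
    have : 4*x < 1 := by rw [hxdef]; linarith
    linarith
  have hsq : (1 - 2*x*S)^2 = 1 - 4*x := by
    have hkey := gkey hx0 hx
    rw [← hS] at hkey
    linear_combination (-4*x) * hkey
  have h4x : 1 - 4*x = 1 - y := by rw [hxdef]; ring
  rw [← h4x, ← hsq, Real.sqrt_sq hpos]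

noncomputable def catC (ρ : ℝ) : ℕ → ℝ
  | 0 => 1
  | (k+1) => -2 * (catalan k) * (ρ^2/4)^(k+1)

lemma catC_abs {ρ : ℝ} (h1 : ρ^2 ≤ 1) (k : ℕ) : |catC ρ k| ≤ (ρ^2)^k := by
  cases k with
  | zero => simp [catC]
  | succ k =>
    have h0 : (0:ℝ) ≤ ρ^2 := sq_nonneg ρ
    rw [catC]
    have hc := cat_le_four_pow k
    have habs : |(-2:ℝ) * (catalan k) * (ρ^2/4)^(k+1)|
        = 2 * ((catalan k:ℕ):ℝ) * ((ρ^2)^(k+1)/4^(k+1)) := by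
      rw [abs_mul, abs_mul, abs_of_nonneg (by positivity : (0:ℝ) ≤ ((catalan k:ℕ):ℝ)),
        abs_of_nonneg (by positivity : (0:ℝ) ≤ (ρ^2/4)^(k+1)), div_pow]
      norm_num
    rw [habs]
    calc 2 * ((catalan k:ℕ):ℝ) * ((ρ^2)^(k+1)/4^(k+1))
        ≤ 2 * 4^k * ((ρ^2)^(k+1)/4^(k+1)) := by
          apply mul_le_mul_of_nonneg_right _ (by positivity)
          linarith
    _ = (ρ^2)^(k+1) * (2 * 4^k/4^(k+1)) := by ring
    _ ≤ (ρ^2)^(k+1) * 1 := by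
          apply mul_le_mul_of_nonneg_left _ (by positivity)
          rw [div_le_one (by positivity)]
          have : (4:ℝ)^(k+1) = 4*4^k := by ring
          nlinarith [pow_pos (show (0:ℝ)<4 by norm_num) k]
    _ = (ρ^2)^(k+1) := by ring

lemma summable_catC {ρ : ℝ} (h1 : ρ^2 < 1) {b : ℕ → ℝ} (hb : ∀ k, |b k| ≤ 1) :
    Summable (fun k => catC ρ k * b k) := by
  refine Summable.of_norm ?_
  have hgeo : Summable (fun k : ℕ => (ρ^2)^k) :=
    summable_geometric_of_lt_one (sq_nonneg ρ) h1
  refine Summable.of_nonneg_of_le (fun k => norm_nonneg _) (fun k => ?_) hgeo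
  rw [Real.norm_eq_abs, abs_mul]
  calc |catC ρ k| * |b k| ≤ (ρ^2)^k * 1 :=
    mul_le_mul (catC_abs h1.le k) (hb k) (abs_nonneg _) (by positivity)
  _ = (ρ^2)^k := by ring

lemma b_abs_le (l : ℝ) (hl : l ∈ Set.Icc (0:ℝ) 1) (k : ℕ) :
    |l^(2*k) * Real.sqrt (1 - l^2)| ≤ 1 := by
  obtain ⟨hl0, hl1⟩ := hl
  rw [abs_mul]
  have h1 : |l^(2*k)| ≤ 1 := by
    rw [abs_pow]
    apply pow_le_one₀ (abs_nonneg _)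
    rw [abs_of_nonneg hl0]; exact hl1
  have h2 : |Real.sqrt (1 - l^2)| ≤ 1 := by
    rw [abs_of_nonneg (Real.sqrt_nonneg _)]
    calc Real.sqrt (1 - l^2) ≤ Real.sqrt 1 := Real.sqrt_le_sqrt (by nlinarith)
    _ = 1 := Real.sqrt_one
  calc |l^(2*k)| * |Real.sqrt (1 - l^2)| ≤ 1 * 1 :=
    mul_le_mul h1 h2 (abs_nonneg _) (by norm_num)
  _ = 1 := by ring

lemma pointwise {ρ : ℝ} (h0 : 0 ≤ ρ) (h1 : ρ < 1) {l : ℝ} (hl : l ∈ Set.Icc (0:ℝ) 1) :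
    Real.sqrt ((1 - l^2) * (1 - ρ^2*l^2))
      = ∑' k, catC ρ k * (l^(2*k) * Real.sqrt (1 - l^2)) := by
  obtain ⟨hl0, hl1⟩ := hl
  have hρ2 : ρ^2 < 1 := by nlinarith
  have hy0 : 0 ≤ ρ^2*l^2 := by positivity
  have hl2 : l^2 ≤ 1 := by nlinarith
  have hy1 : ρ^2*l^2 < 1 := by nlinarith [mul_nonneg (sq_nonneg ρ) (sub_nonneg.mpr hl2)]
  have hsplit : Real.sqrt ((1 - l^2) * (1 - ρ^2*l^2))
      = Real.sqrt (1 - l^2) * Real.sqrt (1 - ρ^2*l^2) :=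
    Real.sqrt_mul (by nlinarith) _
  have hgf := sqrt_one_sub_catalan hy0 hy1
  have hsum : Summable (fun k => catC ρ k * (l^(2*k) * Real.sqrt (1 - l^2))) :=
    summable_catC hρ2 (b_abs_le l ⟨hl0, hl1⟩)
  rw [Summable.tsum_eq_zero_add hsum]
  have hterm : ∀ k : ℕ, catC ρ (k+1) * (l^(2*(k+1)) * Real.sqrt (1 - l^2))
      = ((-2*(ρ^2*l^2/4)) * ((catalan k : ℝ) * (ρ^2*l^2/4)^k)) * Real.sqrt (1 - l^2) := by
    intro k
    rw [catC]
    have hp : (ρ^2/4)^(k+1) * l^(2*(k+1)) = (ρ^2*l^2/4)^(k+1) := by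
      rw [pow_mul, ← mul_pow]
      congr 1
      ring
    have : (-2:ℝ) * (catalan k) * (ρ^2/4)^(k+1) * (l^(2*(k+1)) * Real.sqrt (1 - l^2))
        = (-2 * (catalan k)) * ((ρ^2/4)^(k+1) * l^(2*(k+1))) * Real.sqrt (1 - l^2) := by ring
    rw [this, hp, pow_succ]
    ring
  rw [tsum_congr hterm, tsum_mul_right, tsum_mul_left]
  rw [hsplit, hgf]
  have : catC ρ 0 = 1 := rfl
  rw [this]
  ring

lemma coef_abs_le (k : ℕ) : |π/4 * (catalan k : ℝ) / 4^k| ≤ 1 := by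
  have hc := cat_le_four_pow k
  have h4 : (0:ℝ) < 4^k := by positivity
  rw [abs_of_nonneg (by positivity)]
  rw [div_le_one h4]
  calc π/4 * (catalan k:ℝ) ≤ 1 * (catalan k:ℝ) := by
        apply mul_le_mul_of_nonneg_right _ (by positivity)
        linarith [Real.pi_le_four]
  _ = (catalan k:ℝ) := by ring
  _ ≤ 4^k := hc

theorem integral_sqrt_prod (ρ : ℝ) (h0 : 0 ≤ ρ) (h1 : ρ < 1) :
    ∫ l in (0:ℝ)..1, Real.sqrt ((1 - l ^ 2) * (1 - ρ ^ 2 * l ^ 2)) =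
      (Real.pi / 4) *
        (1 - (ρ ^ 2 / 8) *
          ∑' n : ℕ, ((catalan n : ℝ) * (catalan (n + 1)) / 16 ^ n) * ρ ^ (2 * n)) := by
  have hρ2 : ρ^2 < 1 := by nlinarith
  set f : ℕ → ℝ → ℝ := fun k l => catC ρ k * (l^(2*k) * Real.sqrt (1 - l^2)) with hf
  -- integrability of each f k on Ioc 0 1
  have hfc : ∀ k, Continuous (f k) := fun k =>
    continuous_const.mul ((contg k))
  have hint : ∀ k, IntegrableOn (f k) (Set.Ioc (0:ℝ) 1) volume := fun k =>
    (hfc k).integrableOn_Ioc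
  -- value of ∫ f k over Ioc
  have hval : ∀ k, ∫ l in Set.Ioc (0:ℝ) 1, f k l
      = catC ρ k * (π/4 * (catalan k : ℝ) / 4^k) := by
    intro k
    rw [← intervalIntegral.integral_of_le zero_le_one]
    rw [hf]
    simp only []
    rw [intervalIntegral.integral_const_mul, wallisI k]
  -- norm integrals
  have hnorm : ∀ k, ∫ l in Set.Ioc (0:ℝ) 1, ‖f k l‖
      = |catC ρ k| * (π/4 * (catalan k : ℝ) / 4^k) := by
    intro k
    have heq : Set.EqOn (fun l => ‖f k l‖)
        (fun l => |catC ρ k| * (l^(2*k) * Real.sqrt (1 - l^2))) (Set.Ioc (0:ℝ) 1) := by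
      intro l hl
      simp only [hf, Real.norm_eq_abs, abs_mul]
      congr 1
      rw [abs_of_nonneg (pow_nonneg hl.1.le _),
        abs_of_nonneg (Real.sqrt_nonneg _)]
    rw [setIntegral_congr_fun measurableSet_Ioc heq, integral_const_mul,
      ← intervalIntegral.integral_of_le zero_le_one, wallisI k]
  -- summability of norm integrals
  have hsumnorm : Summable (fun k => ∫ l in Set.Ioc (0:ℝ) 1, ‖f k l‖) := by
    have : Summable (fun k => |catC ρ k| * (π/4 * (catalan k : ℝ) / 4^k)) := by
      have h2 : Summable (fun k => catC ρ k * (π/4 * (catalan k : ℝ) / 4^k)) :=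
        summable_catC hρ2 coef_abs_le
      have h3 := h2.abs
      refine h3.congr (fun k => ?_)
      rw [abs_mul, abs_of_nonneg (by positivity : (0:ℝ) ≤ π/4 * (catalan k : ℝ) / 4^k)]
    exact this.congr (fun k => (hnorm k).symm)
  -- swap
  have hswap := MeasureTheory.integral_tsum_of_summable_integral_norm
    (F := f) (μ := volume.restrict (Set.Ioc (0:ℝ) 1)) (fun k => (hint k)) hsumnorm
  -- rewrite the integral
  rw [intervalIntegral.integral_of_le zero_le_one]
  have hcongr : Set.EqOn (fun l => Real.sqrt ((1 - l ^ 2) * (1 - ρ ^ 2 * l ^ 2)))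
      (fun l => ∑' k, f k l) (Set.Ioc (0:ℝ) 1) := by
    intro l hl
    exact pointwise h0 h1 ⟨hl.1.le, hl.2⟩
  rw [setIntegral_congr_fun measurableSet_Ioc hcongr, ← hswap]
  -- evaluate the sum
  have hvals : (∑' k, ∫ l in Set.Ioc (0:ℝ) 1, f k l)
      = ∑' k, catC ρ k * (π/4 * (catalan k : ℝ) / 4^k) := tsum_congr hval
  rw [hvals]
  have hsumc : Summable (fun k => catC ρ k * (π/4 * (catalan k : ℝ) / 4^k)) :=
    summable_catC hρ2 coef_abs_le
  rw [Summable.tsum_eq_zero_add hsumc]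
  have hzero : catC ρ 0 * (π/4 * (catalan 0 : ℝ) / 4^0) = π/4 := by
    simp [catC]
  rw [hzero]
  have hterm : ∀ k : ℕ, catC ρ (k+1) * (π/4 * (catalan (k+1) : ℝ) / 4^(k+1))
      = (π/4 * -(ρ^2/8)) * (((catalan k : ℝ) * (catalan (k+1)) / 16^k) * ρ^(2*k)) := by
    intro k
    rw [catC]
    have h16 : (16:ℝ)^k = 4^k * 4^k := by rw [← mul_pow]; norm_num
    have h4 : (4:ℝ)^k ≠ 0 := by positivity
    rw [h16]
    have hp : (ρ^2/4)^(k+1) = ρ^(2*k) * ρ^2 / (4^k * 4) := by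
      rw [div_pow, pow_mul]; ring
    rw [hp]
    have h41 : (4:ℝ)^(k+1) = 4^k * 4 := by ring
    rw [h41]
    field_simp
    ring
  rw [tsum_congr hterm, tsum_mul_left]
  ring
end
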